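/- For all real μ₂ > 0 and μ₃ > 0, ∫₀^∞ [ ∫₀^∞ (e^{-μ₃·max(s−t,0)} − e^{-μ₃·s})² ds ] · μ₂·e^{-μ₂·t} dt = μ₃/(μ₂·(μ₂+μ₃)). -/

import Mathlib

open Real MeasureTheory Filter


lemma aux_tendsto_exp_neg_mul {b : ℝ} (hb : 0 < b) :
    Tendsto (fun x : ℝ => Real.exp (-(b * x))) atTop (nhds 0) := by
  have h1 : Tendsto (fun x : ℝ => -(b * x)) atTop atBot := by
    apply Filter.tendsto_neg_atBot_iff.mpr
    exact Tendsto.const_mul_atTop hb tendsto_id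
  exact Real.tendsto_exp_atBot.comp h1

lemma aux_hasDerivAt_exp_neg_mul (b x : ℝ) :
    HasDerivAt (fun x : ℝ => Real.exp (-(b * x))) (-b * Real.exp (-(b * x))) x := by
  have h1 : HasDerivAt (fun x : ℝ => -(b * x)) (-b) x := by
    simpa using ((hasDerivAt_id x).const_mul b).fun_neg
  simpa [mul_comm] using h1.exp

lemma aux_integrableOn_exp_neg_mul {b : ℝ} (hb : 0 < b) (a : ℝ) :
    IntegrableOn (fun x : ℝ => Real.exp (-(b * x))) (Set.Ioi a) := by
  simpa [neg_mul] using exp_neg_integrableOn_Ioi a hb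

lemma aux_integral_exp_neg_mul_Ioi {b : ℝ} (hb : 0 < b) (a : ℝ) :
    ∫ x in Set.Ioi a, Real.exp (-(b * x)) = Real.exp (-(b * a)) / b := by
  have hderiv : ∀ x ∈ Set.Ici a,
      HasDerivAt (fun x : ℝ => -Real.exp (-(b * x)) / b) (Real.exp (-(b * x))) x := by
    intro x _
    have h := ((aux_hasDerivAt_exp_neg_mul b x).fun_neg).div_const b
    refine h.congr_deriv ?_
    field_simp
  have htend : Tendsto (fun x : ℝ => -Real.exp (-(b * x)) / b) atTop (nhds 0) := by
    have := ((aux_tendsto_exp_neg_mul hb).neg).div_const b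
    simpa using this
  rw [integral_Ioi_of_hasDerivAt_of_tendsto' hderiv (aux_integrableOn_exp_neg_mul hb a) htend]
  field_simp
  ring
lemma inner_eval {mu3 : ℝ} (hmu3 : 0 < mu3) {t : ℝ} (ht : 0 < t) :
    ∫ s in Set.Ioi (0 : ℝ),
        (Real.exp (-(mu3 * max (s - t) 0)) - Real.exp (-(mu3 * s))) ^ 2
      = t + Real.exp (-(mu3 * t)) / mu3 - 1 / mu3 := by
  have hcont : Continuous fun s : ℝ =>
      (Real.exp (-(mu3 * max (s - t) 0)) - Real.exp (-(mu3 * s))) ^ 2 := by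
    fun_prop
  have hsplit : Set.Ioc (0:ℝ) t ∪ Set.Ioi t = Set.Ioi (0:ℝ) := Set.Ioc_union_Ioi_eq_Ioi ht.le
  -- the integrand on Ioi t
  have hIoiEq : Set.EqOn (fun s : ℝ =>
        (Real.exp (-(mu3 * max (s - t) 0)) - Real.exp (-(mu3 * s))) ^ 2)
      (fun s : ℝ => (Real.exp (mu3 * t) - 1) ^ 2 * Real.exp (-(2 * mu3 * s))) (Set.Ioi t) := by
    intro s hs
    have hst : (0:ℝ) ≤ s - t := by simp only [Set.mem_Ioi] at hs; linarith
    simp only [max_eq_left hst]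
    have h1 : Real.exp (-(mu3 * (s - t))) = Real.exp (mu3 * t) * Real.exp (-(mu3 * s)) := by
      rw [← Real.exp_add]; ring_nf
    have h2 : Real.exp (-(2 * mu3 * s)) = Real.exp (-(mu3 * s)) ^ 2 := by
      rw [sq, ← Real.exp_add]; ring_nf
    rw [h1, h2]; ring
  have hIoi_int : IntegrableOn (fun s : ℝ =>
        (Real.exp (-(mu3 * max (s - t) 0)) - Real.exp (-(mu3 * s))) ^ 2) (Set.Ioi t) := by
    have hbase : IntegrableOn
        (fun s : ℝ => (Real.exp (mu3 * t) - 1) ^ 2 * Real.exp (-(2 * mu3 * s)))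
        (Set.Ioi t) :=
      (aux_integrableOn_exp_neg_mul (by linarith : (0:ℝ) < 2 * mu3) t).const_mul _
    exact hbase.congr_fun (fun s hs => (hIoiEq hs).symm) measurableSet_Ioi
  have hIoc_int : IntegrableOn (fun s : ℝ =>
        (Real.exp (-(mu3 * max (s - t) 0)) - Real.exp (-(mu3 * s))) ^ 2) (Set.Ioc 0 t) :=
    hcont.integrableOn_Ioc
  rw [← hsplit, setIntegral_union (Set.Ioc_disjoint_Ioi le_rfl) measurableSet_Ioi
      hIoc_int hIoi_int]
  -- Ioi t part
  have hIoi_val : ∫ s in Set.Ioi t,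
        (Real.exp (-(mu3 * max (s - t) 0)) - Real.exp (-(mu3 * s))) ^ 2
      = (Real.exp (mu3 * t) - 1) ^ 2 * (Real.exp (-(2 * mu3 * t)) / (2 * mu3)) := by
    rw [setIntegral_congr_fun measurableSet_Ioi hIoiEq, integral_const_mul,
      aux_integral_exp_neg_mul_Ioi (by linarith : (0:ℝ) < 2 * mu3) t]
  -- Ioc part
  have hIocEq : Set.EqOn (fun s : ℝ =>
        (Real.exp (-(mu3 * max (s - t) 0)) - Real.exp (-(mu3 * s))) ^ 2)
      (fun s : ℝ => (1 - Real.exp (-(mu3 * s))) ^ 2) (Set.Ioc 0 t) := by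
    intro s hs
    have hst : s - t ≤ 0 := by simp only [Set.mem_Ioc] at hs; linarith
    simp [max_eq_right hst]
  have hIoc_val : ∫ s in Set.Ioc (0:ℝ) t,
        (Real.exp (-(mu3 * max (s - t) 0)) - Real.exp (-(mu3 * s))) ^ 2
      = (t + 2 * Real.exp (-(mu3 * t)) / mu3 - Real.exp (-(2 * mu3 * t)) / (2 * mu3))
        - (2 / mu3 - 1 / (2 * mu3)) := by
    rw [setIntegral_congr_fun measurableSet_Ioc hIocEq,
      ← intervalIntegral.integral_of_le ht.le]
    have hderiv : ∀ s ∈ Set.uIcc (0:ℝ) t,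
        HasDerivAt (fun s : ℝ => s + 2 * Real.exp (-(mu3 * s)) / mu3
            - Real.exp (-(2 * mu3 * s)) / (2 * mu3))
          ((1 - Real.exp (-(mu3 * s))) ^ 2) s := by
      intro s _
      have h1 := ((aux_hasDerivAt_exp_neg_mul mu3 s).const_mul 2).div_const mu3
      have h2 := (aux_hasDerivAt_exp_neg_mul (2 * mu3) s).div_const (2 * mu3)
      have h := ((hasDerivAt_id s).fun_add h1).fun_sub h2
      refine h.congr_deriv ?_
      have h3 : Real.exp (-(2 * mu3 * s)) = Real.exp (-(mu3 * s)) ^ 2 := by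
        rw [sq, ← Real.exp_add]; ring_nf
      rw [h3]; field_simp; ring
    rw [intervalIntegral.integral_eq_sub_of_hasDerivAt hderiv
      (Continuous.intervalIntegrable (by fun_prop) 0 t)]
    simp [Real.exp_zero]
  rw [hIoc_val, hIoi_val]
  have hE : Real.exp (-(mu3 * t)) * Real.exp (mu3 * t) = 1 := by
    rw [← Real.exp_add]; simp
  have h2 : Real.exp (-(2 * mu3 * t)) = Real.exp (-(mu3 * t)) ^ 2 := by
    rw [sq, ← Real.exp_add]; ring_nf
  rw [h2]
  have key : (Real.exp (mu3 * t) - 1) ^ 2 * Real.exp (-(mu3 * t)) ^ 2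
      = (1 - Real.exp (-(mu3 * t))) ^ 2 := by
    rw [← mul_pow]
    congr 1
    linear_combination hE
  rw [show (Real.exp (mu3 * t) - 1) ^ 2 * (Real.exp (-(mu3 * t)) ^ 2 / (2 * mu3))
      = ((Real.exp (mu3 * t) - 1) ^ 2 * Real.exp (-(mu3 * t)) ^ 2) / (2 * mu3) from by ring,
    key]
  field_simp
  ring
lemma aux_tendsto_id_mul_exp_neg_mul {b : ℝ} (hb : 0 < b) :
    Tendsto (fun x : ℝ => x * Real.exp (-(b * x))) atTop (nhds 0) := by
  have h1 : Tendsto (fun y : ℝ => y * Real.exp (-y)) atTop (nhds 0) := by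
    simpa using Real.tendsto_pow_mul_exp_neg_atTop_nhds_zero 1
  have h2 : Tendsto (fun x : ℝ => b * x) atTop atTop :=
    Tendsto.const_mul_atTop hb tendsto_id
  have h3 := (h1.comp h2).const_mul (1 / b)
  simp only [mul_zero] at h3
  refine h3.congr fun x => ?_
  simp only [Function.comp_apply]
  field_simp

/-- Second term of the protein variance in the all-exponential case:
`∫₀^∞ [∫₀^∞ (e^{-μ₃ max(s-t,0)} - e^{-μ₃ s})² ds] μ₂ e^{-μ₂ t} dt = μ₃/(μ₂(μ₂+μ₃))`. -/
theorem second_term_all_exponential (mu2 mu3 : ℝ) (hmu2 : 0 < mu2) (hmu3 : 0 < mu3) :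
    ∫ t in Set.Ioi (0 : ℝ),
        (∫ s in Set.Ioi (0 : ℝ),
          (Real.exp (-(mu3 * max (s - t) 0)) - Real.exp (-(mu3 * s))) ^ 2)
          * (mu2 * Real.exp (-(mu2 * t)))
      = mu3 / (mu2 * (mu2 + mu3)) := by
  have hcongr : ∫ t in Set.Ioi (0 : ℝ),
        (∫ s in Set.Ioi (0 : ℝ),
          (Real.exp (-(mu3 * max (s - t) 0)) - Real.exp (-(mu3 * s))) ^ 2)
          * (mu2 * Real.exp (-(mu2 * t)))
      = ∫ t in Set.Ioi (0 : ℝ),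
        (t + Real.exp (-(mu3 * t)) / mu3 - 1 / mu3) * (mu2 * Real.exp (-(mu2 * t))) := by
    refine setIntegral_congr_fun measurableSet_Ioi fun t ht => ?_
    rw [inner_eval hmu3 ht]
  rw [hcongr]
  set F : ℝ → ℝ := fun t =>
    -((t + 1 / mu2) * Real.exp (-(mu2 * t)))
      - mu2 / (mu3 * (mu2 + mu3)) * Real.exp (-((mu2 + mu3) * t))
      + (1 / mu3) * Real.exp (-(mu2 * t)) with hF
  have hderiv : ∀ t ∈ Set.Ici (0:ℝ), HasDerivAt F
      ((t + Real.exp (-(mu3 * t)) / mu3 - 1 / mu3) * (mu2 * Real.exp (-(mu2 * t)))) t := by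
    intro t _
    have h1 : HasDerivAt (fun t : ℝ => (t + 1 / mu2) * Real.exp (-(mu2 * t)))
        (1 * Real.exp (-(mu2 * t)) + (t + 1 / mu2) * (-mu2 * Real.exp (-(mu2 * t)))) t :=
      ((hasDerivAt_id t).add_const (1 / mu2)).mul (aux_hasDerivAt_exp_neg_mul mu2 t)
    have h2 := (aux_hasDerivAt_exp_neg_mul (mu2 + mu3) t).const_mul (mu2 / (mu3 * (mu2 + mu3)))
    have h3 := (aux_hasDerivAt_exp_neg_mul mu2 t).const_mul (1 / mu3)
    have h := (h1.fun_neg.fun_sub h2).fun_add h3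
    refine h.congr_deriv ?_
    have hE : Real.exp (-((mu2 + mu3) * t)) = Real.exp (-(mu2 * t)) * Real.exp (-(mu3 * t)) := by
      rw [← Real.exp_add]; ring_nf
    rw [hE]
    field_simp
    ring
  have hpos : ∀ t ∈ Set.Ioi (0:ℝ),
      0 ≤ (t + Real.exp (-(mu3 * t)) / mu3 - 1 / mu3) * (mu2 * Real.exp (-(mu2 * t))) := by
    intro t ht
    have h1 : -(mu3 * t) + 1 ≤ Real.exp (-(mu3 * t)) := Real.add_one_le_exp _
    have h2 : 0 ≤ t + Real.exp (-(mu3 * t)) / mu3 - 1 / mu3 := by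
      have h3 : t + Real.exp (-(mu3 * t)) / mu3 - 1 / mu3
          = (mu3 * t + Real.exp (-(mu3 * t)) - 1) / mu3 := by field_simp
      rw [h3]
      exact div_nonneg (by linarith) hmu3.le
    exact mul_nonneg h2 (mul_nonneg hmu2.le (Real.exp_pos _).le)
  have htend : Tendsto F atTop (nhds 0) := by
    have t1 : Tendsto (fun t : ℝ => (t + 1 / mu2) * Real.exp (-(mu2 * t))) atTop (nhds 0) := by
      have := (aux_tendsto_id_mul_exp_neg_mul hmu2).add
        ((aux_tendsto_exp_neg_mul hmu2).const_mul (1 / mu2))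
      simp only [add_zero, mul_zero] at this
      refine this.congr fun x => by ring
    have t2 := (aux_tendsto_exp_neg_mul (by linarith : (0:ℝ) < mu2 + mu3)).const_mul
      (mu2 / (mu3 * (mu2 + mu3)))
    have t3 := (aux_tendsto_exp_neg_mul hmu2).const_mul (1 / mu3)
    simp only [mul_zero] at t2 t3
    have := (t1.neg.sub t2).add t3
    rw [hF]
    simpa [one_div] using this
  rw [integral_Ioi_of_hasDerivAt_of_nonneg' hderiv hpos htend]
  simp only [hF]
  norm_num [Real.exp_zero]
  field_simp
  ring
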